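/- Billingsley's lemma, lower bound part: let μ be a finite Borel measure on [0,1] and E ⊆ [0,1] a Borel set with μ(E) > 0. If for μ-almost every x ∈ E, liminf_{n→∞} log μ(I_n(x)) / log |I_n(x)| ≥ s, then the Hausdorff dimension of E is at least s. -/

import Mathlib

open Filter MeasureTheory
open scoped NNReal ENNReal Topology

/-- The generation-n half-open b-adic interval containing x. -/
noncomputable def badicItv (b n : ℕ) (x : ℝ) : Set ℝ :=
  Set.Ico ((⌊(b : ℝ) ^ n * x⌋ : ℝ) / (b : ℝ) ^ n) (((⌊(b : ℝ) ^ n * x⌋ : ℝ) + 1) / (b : ℝ) ^ n)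

/-- The lower local dimension of μ at x with respect to b-adic intervals. -/
noncomputable def lowerLocalDim (b : ℕ) (μ : Measure ℝ) (x : ℝ) : ℝ :=
  liminf (fun n : ℕ =>
    Real.log ((μ (badicItv b n x)).toReal) / Real.log ((b : ℝ) ^ (-(n : ℝ)))) atTop

lemma mem_badicItv_self {b : ℕ} (hb : 2 ≤ b) (n : ℕ) (x : ℝ) : x ∈ badicItv b n x := by
  have hc : (0:ℝ) < (b:ℝ) ^ n := by
    have : (0:ℝ) < (b:ℝ) := by exact_mod_cast Nat.lt_of_lt_of_le two_pos hb
    positivity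
  constructor
  · rw [div_le_iff₀ hc, mul_comm]; exact Int.floor_le _
  · rw [lt_div_iff₀ hc, mul_comm]; exact Int.lt_floor_add_one _

lemma badicItv_eq_of_mem {b : ℕ} (hb : 2 ≤ b) {n : ℕ} {k : ℤ} {y : ℝ}
    (hy : y ∈ Set.Ico ((k:ℝ) / (b:ℝ)^n) (((k:ℝ)+1) / (b:ℝ)^n)) :
    badicItv b n y = Set.Ico ((k:ℝ) / (b:ℝ)^n) (((k:ℝ)+1) / (b:ℝ)^n) := by
  have hc : (0:ℝ) < (b:ℝ) ^ n := by
    have : (0:ℝ) < (b:ℝ) := by exact_mod_cast Nat.lt_of_lt_of_le two_pos hb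
    positivity
  have hk : ⌊(b:ℝ)^n * y⌋ = k := by
    rw [Int.floor_eq_iff]
    constructor
    · rw [mul_comm, ← div_le_iff₀ hc]; exact hy.1
    · rw [mul_comm, ← lt_div_iff₀ hc]; exact hy.2
  rw [badicItv, hk]

lemma exists_gen {b : ℕ} (hb : 2 ≤ b) {m : ℕ} {d : ℝ} (hd : 0 < d) (hdm : d ≤ ((b:ℝ)^(m+1))⁻¹) :
    ∃ n, m ≤ n ∧ ((b:ℝ)^(n+1))⁻¹ ≤ d ∧ d < ((b:ℝ)^n)⁻¹ := by
  have hb1 : (1:ℝ) < (b:ℝ) := by exact_mod_cast Nat.lt_of_lt_of_le one_lt_two hb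
  have hinv : (b:ℝ)⁻¹ < 1 := inv_lt_one_of_one_lt₀ hb1
  have hex' : ∃ N, ((b:ℝ)^N)⁻¹ ≤ d := by
    obtain ⟨N, hN⟩ := exists_pow_lt_of_lt_one hd hinv
    exact ⟨N, by rw [← inv_pow]; exact hN.le⟩
  classical
  have hNspec : ((b:ℝ)^(Nat.find hex'))⁻¹ ≤ d := Nat.find_spec hex'
  have hNm : m + 1 ≤ Nat.find hex' := by
    by_contra hlt
    push_neg at hlt
    have hj := Nat.lt_succ_iff.mp hlt
    have : ((b:ℝ)^(m+1))⁻¹ < ((b:ℝ)^(Nat.find hex'))⁻¹ := by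
      apply inv_strictAnti₀ (by positivity)
      exact pow_lt_pow_right₀ hb1 (Nat.lt_succ_of_le hj)
    linarith
  refine ⟨Nat.find hex' - 1, by omega, ?_, ?_⟩
  · have : Nat.find hex' - 1 + 1 = Nat.find hex' := by omega
    rw [this]; exact hNspec
  · have hlt := Nat.find_min hex' (m := Nat.find hex' - 1) (by omega)
    push_neg at hlt
    exact hlt

lemma cover_bound' {b : ℕ} (hb : 2 ≤ b) (μ : Measure ℝ) {t : ℝ} (ht : 0 < t) (m : ℕ) (F : Set ℝ)
    (hF : ∀ x ∈ F, ∀ n, m ≤ n → μ (badicItv b n x) ≤ ENNReal.ofReal (((b:ℝ)^n)⁻¹ ^ t))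
    (A : Set ℝ) (hA : EMetric.diam A ≤ ENNReal.ofReal (((b:ℝ)^(m+1))⁻¹)) :
    μ (A ∩ F) ≤ ENNReal.ofReal (3 * (b:ℝ) ^ t) * ⨆ _ : A.Nonempty, EMetric.diam A ^ t := by
  have hb1 : (1:ℝ) < (b:ℝ) := by exact_mod_cast Nat.lt_of_lt_of_le one_lt_two hb
  have hb0 : (0:ℝ) < (b:ℝ) := lt_trans one_pos hb1
  rcases (A ∩ F).eq_empty_or_nonempty with hAF | ⟨x, hxA, hxF⟩
  · simp [hAF]
  have hAne : A.Nonempty := ⟨x, hxA⟩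
  rw [iSup_pos hAne]
  have hdiam_ne : EMetric.diam A ≠ ⊤ := ne_top_of_le_ne_top ENNReal.ofReal_ne_top hA
  set d : ℝ := (EMetric.diam A).toReal with hd_def
  rcases eq_or_ne (EMetric.diam A) 0 with hdz | hdnz
  · -- diam zero: A ∩ F ⊆ {x} and μ {x} = 0
    have hsub : A ∩ F ⊆ ({x} : Set ℝ) := fun y hy =>
      ((EMetric.diam_eq_zero_iff.mp hdz) hy.1 hxA)
    have h0 : μ {x} = 0 := by
      have hle : ∀ n : ℕ, μ ({x} : Set ℝ) ≤ ENNReal.ofReal (((b:ℝ)^(n+m))⁻¹ ^ t) := fun n =>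
        le_trans (measure_mono (Set.singleton_subset_iff.mpr (mem_badicItv_self hb _ x)))
          (hF x hxF (n+m) (by omega))
      have hreal : Tendsto (fun n : ℕ => ((b:ℝ)^(n+m))⁻¹ ^ t) atTop (𝓝 0) := by
        have h1 : Tendsto (fun n : ℕ => ((b:ℝ)⁻¹)^(n+m)) atTop (𝓝 0) :=
          (tendsto_pow_atTop_nhds_zero_of_lt_one (by positivity)
            (inv_lt_one_of_one_lt₀ hb1)).comp (tendsto_add_atTop_nat m)
        have h1' : Tendsto (fun n : ℕ => ((b:ℝ)^(n+m))⁻¹) atTop (𝓝 0) := by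
          simpa [inv_pow] using h1
        have := h1'.rpow_const (p := t) (Or.inr ht.le)
        simpa [Real.zero_rpow ht.ne'] using this
      have htend : Tendsto (fun n : ℕ => ENNReal.ofReal (((b:ℝ)^(n+m))⁻¹ ^ t)) atTop (𝓝 0) := by
        have := (ENNReal.continuous_ofReal.tendsto 0).comp hreal
        simpa [Function.comp_def] using this
      exact le_zero_iff.mp (ge_of_tendsto' htend hle)
    calc μ (A ∩ F) ≤ μ {x} := measure_mono hsub
      _ = 0 := h0
      _ ≤ _ := zero_le
  · -- diam positive
    have hd0 : 0 < d := ENNReal.toReal_pos hdnz hdiam_ne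
    have hdm : d ≤ ((b:ℝ)^(m+1))⁻¹ := by
      have := ENNReal.toReal_mono ENNReal.ofReal_ne_top hA
      rwa [ENNReal.toReal_ofReal (by positivity)] at this
    obtain ⟨n, hmn, hlow, hhigh⟩ := exists_gen hb hd0 hdm
    set c : ℝ := (b:ℝ)^n with hc_def
    have hc0 : (0:ℝ) < c := by positivity
    set k : ℤ := ⌊c * x⌋ with hk_def
    have hxmem : x ∈ badicItv b n x := mem_badicItv_self hb n x
    have hx1 : (k:ℝ)/c ≤ x := hxmem.1
    have hx2 : x < ((k:ℝ)+1)/c := hxmem.2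
    -- every point of A is within d of x
    have hdist : ∀ y ∈ A, |y - x| ≤ d := by
      intro y hy
      have he := EMetric.edist_le_diam_of_mem hy hxA
      have := ENNReal.toReal_mono hdiam_ne he
      rwa [← dist_edist, Real.dist_eq] at this
    -- per-interval bound
    have hJ : ∀ j : ℤ, μ (Set.Ico ((j:ℝ)/c) (((j:ℝ)+1)/c) ∩ F) ≤ ENNReal.ofReal (c⁻¹ ^ t) := by
      intro j
      rcases (Set.Ico ((j:ℝ)/c) (((j:ℝ)+1)/c) ∩ F).eq_empty_or_nonempty with he | ⟨z, hzJ, hzF⟩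
      · simp [he]
      · calc μ (Set.Ico ((j:ℝ)/c) (((j:ℝ)+1)/c) ∩ F)
            ≤ μ (Set.Ico ((j:ℝ)/c) (((j:ℝ)+1)/c)) := measure_mono Set.inter_subset_left
          _ = μ (badicItv b n z) := by rw [badicItv_eq_of_mem hb hzJ]
          _ ≤ ENNReal.ofReal (((b:ℝ)^n)⁻¹ ^ t) := hF z hzF n hmn
    -- A ∩ F covered by three intervals
    have hcov : A ∩ F ⊆ Set.Ico (((k-1:ℤ):ℝ)/c) ((((k-1:ℤ):ℝ)+1)/c) ∪
        (Set.Ico ((k:ℝ)/c) (((k:ℝ)+1)/c) ∪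
         Set.Ico (((k+1:ℤ):ℝ)/c) ((((k+1:ℤ):ℝ)+1)/c)) := by
      rintro y ⟨hyA, -⟩
      have habs := hdist y hyA
      rw [abs_le] at habs
      have hy1 : (k:ℝ) - 1 ≤ y * c := by
        have h1 : (k:ℝ) ≤ x * c := by rwa [← div_le_iff₀ hc0]
        have h2 : d * c < 1 := by
          have := mul_lt_mul_of_pos_right hhigh hc0
          rwa [inv_mul_cancel₀ hc0.ne'] at this
        nlinarith [habs.1]
      have hy2 : y * c < (k:ℝ) + 2 := by
        have h1 : x * c < (k:ℝ) + 1 := by rwa [← lt_div_iff₀ hc0]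
        have h2 : d * c < 1 := by
          have := mul_lt_mul_of_pos_right hhigh hc0
          rwa [inv_mul_cancel₀ hc0.ne'] at this
        nlinarith [habs.2]
      by_cases hcase1 : y * c < (k:ℝ)
      · left
        constructor
        · rw [div_le_iff₀ hc0]; push_cast; linarith
        · rw [lt_div_iff₀ hc0]; push_cast; linarith
      · push_neg at hcase1
        by_cases hcase2 : y * c < (k:ℝ) + 1
        · right; left
          constructor
          · rw [div_le_iff₀ hc0]; linarith
          · rw [lt_div_iff₀ hc0]; linarith
        · push_neg at hcase2
          right; right
          constructor
          · rw [div_le_iff₀ hc0]; push_cast; linarith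
          · rw [lt_div_iff₀ hc0]; push_cast; linarith
    -- combine
    have hsum : μ (A ∩ F) ≤ 3 * ENNReal.ofReal (c⁻¹ ^ t) := by
      have step : μ (A ∩ F) ≤
          μ (Set.Ico (((k-1:ℤ):ℝ)/c) ((((k-1:ℤ):ℝ)+1)/c) ∩ F) +
          (μ (Set.Ico ((k:ℝ)/c) (((k:ℝ)+1)/c) ∩ F) +
           μ (Set.Ico (((k+1:ℤ):ℝ)/c) ((((k+1:ℤ):ℝ)+1)/c) ∩ F)) := by
        calc μ (A ∩ F) ≤ μ ((Set.Ico (((k-1:ℤ):ℝ)/c) ((((k-1:ℤ):ℝ)+1)/c) ∩ F) ∪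
              ((Set.Ico ((k:ℝ)/c) (((k:ℝ)+1)/c) ∩ F) ∪
               (Set.Ico (((k+1:ℤ):ℝ)/c) ((((k+1:ℤ):ℝ)+1)/c) ∩ F))) := by
              apply measure_mono
              intro y hy
              rcases hcov hy with h | h | h
              · exact Or.inl ⟨h, hy.2⟩
              · exact Or.inr (Or.inl ⟨h, hy.2⟩)
              · exact Or.inr (Or.inr ⟨h, hy.2⟩)
          _ ≤ _ := le_trans (measure_union_le _ _)
              (add_le_add le_rfl (measure_union_le _ _))
      calc μ (A ∩ F) ≤ _ := step
        _ ≤ ENNReal.ofReal (c⁻¹ ^ t) + (ENNReal.ofReal (c⁻¹ ^ t) + ENNReal.ofReal (c⁻¹ ^ t)) :=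
            add_le_add (hJ _) (add_le_add (hJ _) (hJ _))
        _ = 3 * ENNReal.ofReal (c⁻¹ ^ t) := by ring
    -- arithmetic finish
    have hkey : c⁻¹ ^ t ≤ (b:ℝ) ^ t * d ^ t := by
      have hsplit : c⁻¹ = (b:ℝ) * ((b:ℝ)^(n+1))⁻¹ := by
        rw [hc_def, pow_succ]
        field_simp
      rw [hsplit, Real.mul_rpow hb0.le (by positivity)]
      exact mul_le_mul_of_nonneg_left (Real.rpow_le_rpow (by positivity) hlow ht.le)
        (Real.rpow_nonneg hb0.le t)
    calc μ (A ∩ F) ≤ 3 * ENNReal.ofReal (c⁻¹ ^ t) := hsum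
      _ ≤ 3 * ENNReal.ofReal ((b:ℝ) ^ t * d ^ t) :=
          mul_le_mul_right (ENNReal.ofReal_le_ofReal hkey) 3
      _ = ENNReal.ofReal (3 * (b:ℝ) ^ t) * ENNReal.ofReal (d ^ t) := by
          rw [← ENNReal.ofReal_mul (by positivity), ← ENNReal.ofReal_ofNat,
            ← ENNReal.ofReal_mul (by norm_num), mul_assoc]
      _ = ENNReal.ofReal (3 * (b:ℝ) ^ t) * EMetric.diam A ^ t := by
          rw [← ENNReal.ofReal_rpow_of_pos hd0, hd_def, ENNReal.ofReal_toReal hdiam_ne]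

lemma hm_lower {b : ℕ} (hb : 2 ≤ b) (μ : Measure ℝ) {t : ℝ} (ht : 0 < t) (m : ℕ) (F : Set ℝ)
    (hF : ∀ x ∈ F, ∀ n, m ≤ n → μ (badicItv b n x) ≤ ENNReal.ofReal (((b:ℝ)^n)⁻¹ ^ t)) :
    μ F / ENNReal.ofReal (3 * (b:ℝ) ^ t) ≤ μH[t] F := by
  have hb0 : (0:ℝ) < (b:ℝ) := by
    have : (0:ℕ) < b := by omega
    exact_mod_cast this
  rw [MeasureTheory.Measure.hausdorffMeasure_apply]
  refine le_iSup₂_of_le (ENNReal.ofReal (((b:ℝ)^(m+1))⁻¹))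
    (ENNReal.ofReal_pos.mpr (by positivity)) ?_
  refine le_iInf fun A => le_iInf fun hcov => le_iInf fun hdiam => ?_
  have hμ : μ F ≤ ENNReal.ofReal (3 * (b:ℝ)^t) *
      ∑' i, ⨆ _ : (A i).Nonempty, EMetric.diam (A i) ^ t := by
    calc μ F ≤ ∑' i, μ (A i ∩ F) := by
          refine le_trans (measure_mono (fun y hy => ?_)) (measure_iUnion_le _)
          obtain ⟨i, hi⟩ := Set.mem_iUnion.mp (hcov hy)
          exact Set.mem_iUnion.mpr ⟨i, hi, hy⟩
      _ ≤ ∑' i, ENNReal.ofReal (3 * (b:ℝ)^t) *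
            (⨆ _ : (A i).Nonempty, EMetric.diam (A i) ^ t) :=
          ENNReal.tsum_le_tsum (fun i => cover_bound' hb μ ht m F hF (A i) (hdiam i))
      _ = _ := ENNReal.tsum_mul_left
  exact ENNReal.div_le_of_le_mul' hμ

lemma dim_lower {b : ℕ} (hb : 2 ≤ b) (μ : Measure ℝ) {t : ℝ} (ht : 0 < t) (m : ℕ) (F : Set ℝ)
    (hF : ∀ x ∈ F, ∀ n, m ≤ n → μ (badicItv b n x) ≤ ENNReal.ofReal (((b:ℝ)^n)⁻¹ ^ t))
    (hFpos : 0 < μ F) : ENNReal.ofReal t ≤ dimH F := by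
  have hb0 : (0:ℝ) < (b:ℝ) := by
    have : (0:ℕ) < b := by omega
    exact_mod_cast this
  have h1 : μH[t] F ≠ 0 := by
    intro h0
    have hle := hm_lower hb μ ht m F hF
    rw [h0, le_zero_iff, ENNReal.div_eq_zero_iff] at hle
    rcases hle with h | h
    · exact hFpos.ne' h
    · exact ENNReal.ofReal_ne_top h
  have ht' : ((t.toNNReal : ℝ≥0) : ℝ) = t := Real.coe_toNNReal t ht.le
  have h2 : μH[((t.toNNReal : ℝ≥0) : ℝ)] F ≠ 0 := by rw [ht']; exact h1
  exact le_dimH_of_hausdorffMeasure_ne_zero h2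

-- boundedness below of the ratio sequence
lemma ratio_bdd {b : ℕ} (hb : 2 ≤ b) (μ : Measure ℝ) [IsFiniteMeasure μ] (x : ℝ) :
    IsBoundedUnder (· ≥ ·) atTop (fun n : ℕ =>
      Real.log ((μ (badicItv b n x)).toReal) / Real.log ((b : ℝ) ^ (-(n : ℝ)))) := by
  have hb1 : (1:ℝ) < (b:ℝ) := by exact_mod_cast Nat.lt_of_lt_of_le one_lt_two hb
  have hb0 : (0:ℝ) < (b:ℝ) := lt_trans one_pos hb1
  have hlb : (0:ℝ) < Real.log b := Real.log_pos hb1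
  set M : ℝ := max (Real.log ((μ Set.univ).toReal)) 0 with hM
  have hM0 : 0 ≤ M := le_max_right _ _
  refine isBoundedUnder_of ⟨-(M / Real.log b), fun n => ?_⟩
  have hden : Real.log ((b:ℝ) ^ (-(n:ℝ))) = -(n:ℝ) * Real.log b := Real.log_rpow hb0 _
  set L : ℝ := Real.log ((μ (badicItv b n x)).toReal) with hL
  have hLM : L ≤ M := by
    rcases le_or_gt ((μ (badicItv b n x)).toReal) 1 with h1 | h1
    · exact le_trans (Real.log_nonpos (ENNReal.toReal_nonneg) h1) hM0
    · refine le_trans (le_trans (Real.log_le_log (by linarith) ?_) (le_max_left _ _)) le_rfl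
      exact ENNReal.toReal_mono (measure_ne_top μ _) (measure_mono (Set.subset_univ _))
  rw [hden]
  rcases Nat.eq_zero_or_pos n with rfl | hn
  · simp only [Nat.cast_zero, neg_zero, zero_mul, div_zero]
    have : 0 ≤ M / Real.log b := by positivity
    linarith
  · have hn1 : (1:ℝ) ≤ (n:ℝ) := by exact_mod_cast hn
    have hD : -(n:ℝ) * Real.log b < 0 := by nlinarith
    rcases le_or_gt L 0 with hL0 | hL0
    · have h1 : 0 ≤ L / (-(n:ℝ) * Real.log b) := div_nonneg_of_nonpos hL0 hD.le
      have h2 : 0 ≤ M / Real.log b := by positivity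
      linarith
    · have h1 : L / ((n:ℝ) * Real.log b) ≤ M / Real.log b := by
        apply div_le_div₀ hM0 hLM hlb
        nlinarith
      have h2 : L / (-(n:ℝ) * Real.log b) = -(L / ((n:ℝ) * Real.log b)) := by
        rw [neg_mul, div_neg]
      rw [h2]
      linarith

lemma exists_good_m {b : ℕ} (hb : 2 ≤ b) (μ : Measure ℝ) [IsFiniteMeasure μ] {x : ℝ}
    {s t : ℝ} (ht : 0 < t) (hts : t < s) (hx : s ≤ lowerLocalDim b μ x) :
    ∃ m : ℕ, ∀ n, m ≤ n → μ (badicItv b n x) ≤ ENNReal.ofReal (((b:ℝ)^n)⁻¹ ^ t) := by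
  have hb1 : (1:ℝ) < (b:ℝ) := by exact_mod_cast Nat.lt_of_lt_of_le one_lt_two hb
  have hb0 : (0:ℝ) < (b:ℝ) := lt_trans one_pos hb1
  have hlb : (0:ℝ) < Real.log b := Real.log_pos hb1
  have hx' : t < liminf (fun n : ℕ =>
      Real.log ((μ (badicItv b n x)).toReal) / Real.log ((b : ℝ) ^ (-(n : ℝ)))) atTop :=
    lt_of_lt_of_le hts hx
  have hev := eventually_lt_of_lt_liminf hx' (ratio_bdd hb μ x)
  obtain ⟨m, hm⟩ := eventually_atTop.mp (hev.and (eventually_ge_atTop 1))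
  refine ⟨m, fun n hn => ?_⟩
  obtain ⟨hfn, hn1⟩ := hm n hn
  rcases eq_or_ne (μ (badicItv b n x)) 0 with h0 | h0
  · rw [h0]; exact zero_le
  have hIne : μ (badicItv b n x) ≠ ⊤ := measure_ne_top μ _
  have ha : 0 < (μ (badicItv b n x)).toReal := ENNReal.toReal_pos h0 hIne
  have hn1' : (1:ℝ) ≤ (n:ℝ) := by exact_mod_cast hn1
  have hden : Real.log ((b:ℝ) ^ (-(n:ℝ))) = -(n:ℝ) * Real.log b := Real.log_rpow hb0 _
  rw [hden] at hfn
  have hD : -(n:ℝ) * Real.log b < 0 := by nlinarith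
  have hlog : Real.log (μ (badicItv b n x)).toReal < t * (-(n:ℝ) * Real.log b) :=
    (lt_div_iff_of_neg hD).mp hfn
  have hexp : (μ (badicItv b n x)).toReal < ((b:ℝ)^n)⁻¹ ^ t := by
    have h1 : (μ (badicItv b n x)).toReal = Real.exp (Real.log (μ (badicItv b n x)).toReal) :=
      (Real.exp_log ha).symm
    have h2 : ((b:ℝ)^n)⁻¹ ^ t = Real.exp (Real.log (((b:ℝ)^n)⁻¹) * t) := by
      rw [Real.rpow_def_of_pos (by positivity)]
    have h3 : Real.log (((b:ℝ)^n)⁻¹) = -((n:ℝ) * Real.log b) := by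
      rw [Real.log_inv, Real.log_pow]
    have h4 : t * (-(n:ℝ) * Real.log b) = -((n:ℝ) * Real.log b) * t := by ring
    rw [h1, h2, h3]
    exact Real.exp_lt_exp.mpr (by linarith)
  calc μ (badicItv b n x) = ENNReal.ofReal (μ (badicItv b n x)).toReal :=
        (ENNReal.ofReal_toReal hIne).symm
    _ ≤ ENNReal.ofReal (((b:ℝ)^n)⁻¹ ^ t) := ENNReal.ofReal_le_ofReal hexp.le


theorem billingsley_lower (b : ℕ) (hb : 2 ≤ b) (μ : Measure ℝ) [IsFiniteMeasure μ]
    (hsupp : μ (Set.Icc (0:ℝ) 1)ᶜ = 0) (E : Set ℝ) (hE : MeasurableSet E)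
    (hEsub : E ⊆ Set.Icc (0:ℝ) 1) (s : ℝ) (hpos : 0 < μ E)
    (h : ∀ᵐ x ∂μ, x ∈ E → s ≤ lowerLocalDim b μ x) :
    ENNReal.ofReal s ≤ dimH E := by
  rcases le_or_gt s 0 with hs0 | hs0
  · rw [ENNReal.ofReal_eq_zero.mpr hs0]; exact zero_le
  have key : ∀ t : ℝ, 0 < t → t < s → ENNReal.ofReal t ≤ dimH E := by
    intro t ht hts
    set G : ℕ → Set ℝ := fun m => {x | ∀ n, m ≤ n →
      μ (badicItv b n x) ≤ ENNReal.ofReal (((b:ℝ)^n)⁻¹ ^ t)} with hG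
    set F : ℕ → Set ℝ := fun m => E ∩ G m with hFdef
    have hmono : Monotone F := fun i j hij =>
      Set.inter_subset_inter_right E (fun x hx n hn => hx n (le_trans hij hn))
    have hdir : Directed (· ⊆ ·) F := hmono.directed_le
    have hae : ∀ᵐ x ∂μ, x ∈ E → x ∈ ⋃ m, G m := by
      filter_upwards [h] with x hx hxE
      obtain ⟨m, hm⟩ := exists_good_m hb μ ht hts (hx hxE)
      exact Set.mem_iUnion.mpr ⟨m, hm⟩
    have hEle : μ E ≤ μ (⋃ m, F m) := by
      have hnull : μ (E \ ⋃ m, G m) = 0 := by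
        refine measure_mono_null (fun x hx => ?_) (ae_iff.mp hae)
        simp only [Set.mem_setOf_eq]
        exact fun hcon => hx.2 (hcon hx.1)
      have hle := measure_le_inter_add_diff μ E (⋃ m, G m)
      rw [hnull, add_zero] at hle
      rwa [Set.inter_iUnion] at hle
    have hsup : 0 < ⨆ m, μ (F m) := by
      rw [← hdir.measure_iUnion]
      exact lt_of_lt_of_le hpos hEle
    obtain ⟨m, hm⟩ := lt_iSup_iff.mp hsup
    have hd := dim_lower hb μ ht m (F m) (fun x hx n hn => hx.2 n hn) hm
    exact le_trans hd (dimH_mono Set.inter_subset_left)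
  refine le_of_forall_lt (fun c hc => ?_)
  have hcne : c ≠ ⊤ := hc.ne_top
  have hct : c.toReal < s := by
    rwa [ENNReal.lt_ofReal_iff_toReal_lt hcne] at hc
  set t : ℝ := (max c.toReal 0 + s) / 2 with htdef
  have hmax : 0 ≤ max c.toReal 0 := le_max_right _ _
  have hmax2 : max c.toReal 0 < s := max_lt hct hs0
  have ht0 : 0 < t := by rw [htdef]; linarith
  have hts : t < s := by rw [htdef]; linarith
  have hlt : c < ENNReal.ofReal t := by
    rw [ENNReal.lt_ofReal_iff_toReal_lt hcne, htdef]
    have := le_max_left c.toReal 0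
    linarith
  exact lt_of_lt_of_le hlt (key t ht0 hts)
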